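/- Let 0 < α < 1 and λ ∈ ℝ. Then for every x > 0, the function x ↦ E_{α,1}(λ x^α) is differentiable at x with derivative λ x^{α−1} E_{α,α}(λ x^α). -/

import Mathlib

open Real Filter Metric

/-- Key summability bound for Mittag-Leffler-type series. -/
lemma ml_summable_aux (α R : ℝ) (hα : 0 < α) (hR : 0 ≤ R) :
    Summable (fun k : ℕ => (k : ℝ) * R ^ k / Real.Gamma (α * k + 1)) := by
  set B : ℝ := (2 * R + 1) ^ (α⁻¹) with hBdef
  have h2R : (1 : ℝ) ≤ 2 * R + 1 := by linarith
  have hBpos : 0 < B := Real.rpow_pos_of_pos (by linarith) _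
  have hB1 : 1 ≤ B := Real.one_le_rpow h2R (by positivity)
  have hBα : B ^ α = 2 * R + 1 := by
    rw [hBdef, ← Real.rpow_mul (by linarith), inv_mul_cancel₀ hα.ne', Real.rpow_one]
  set P : ℝ := Real.exp B * B ^ 2 with hPdef
  have hPpos : 0 < P := by positivity
  -- the dominating series
  have hgeo : Summable (fun k : ℕ => P * ((k : ℝ) ^ 1 * (1/2 : ℝ) ^ k)) := by
    exact (summable_pow_mul_geometric_of_norm_lt_one 1
      (by rw [norm_eq_abs]; rw [abs_of_pos] <;> norm_num)).mul_left P
  -- choose K with α * k ≥ 3 for k ≥ K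
  obtain ⟨K, hK⟩ : ∃ K : ℕ, ∀ k ≥ K, (3 : ℝ) ≤ α * k := by
    refine ⟨⌈3 / α⌉₊, fun k hk => ?_⟩
    have h1 : 3 / α ≤ (k : ℝ) := le_trans (Nat.le_ceil _) (by exact_mod_cast hk)
    calc (3 : ℝ) = α * (3 / α) := by field_simp
    _ ≤ α * k := by nlinarith
  have key : ∀ k : ℕ, (3 : ℝ) ≤ α * k →
      (k : ℝ) * R ^ k / Real.Gamma (α * k + 1) ≤ P * ((k : ℝ) ^ 1 * (1/2 : ℝ) ^ k) := by
    intro k hk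
    set m : ℕ := ⌊α * k⌋₊ with hm
    have hαk : (0 : ℝ) ≤ α * k := by linarith
    have hm3 : 3 ≤ m := Nat.le_floor (by exact_mod_cast hk)
    have hmle : (m : ℝ) ≤ α * k := Nat.floor_le hαk
    have hmgt : α * k < (m : ℝ) + 1 := Nat.lt_floor_add_one _
    -- Gamma lower bound: Γ(αk+1) ≥ Γ(m) = (m-1)!
    have hG1 : Real.Gamma (m : ℝ) ≤ Real.Gamma (α * k + 1) := by
      rcases eq_or_lt_of_le (by linarith : (m : ℝ) ≤ α * k + 1) with h | h
      · rw [h]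
      · exact le_of_lt <| Real.Gamma_strictMonoOn_Ici
          (by simp only [Set.mem_Ici]; exact_mod_cast le_trans (by norm_num) hm3)
          (by simp only [Set.mem_Ici]; linarith) h
    have hfac : Real.Gamma (m : ℝ) = (m - 1).factorial := by
      have : m = (m - 1) + 1 := by omega
      rw [this]
      push_cast
      rw [Real.Gamma_nat_eq_factorial]
    -- factorial lower bound
    have hfac2 : B ^ (m - 1) / Real.exp B ≤ ((m - 1).factorial : ℝ) := by
      have h := Real.pow_div_factorial_le_exp B hBpos.le (m - 1)
      rw [div_le_iff₀ (by positivity)] at h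
      rw [div_le_iff₀ (Real.exp_pos _)]
      linarith [h]
    -- B ^ (m-1) ≥ B ^ (αk - 2)
    have hpow : B ^ (α * k - 2) ≤ B ^ (m - 1 : ℕ) := by
      rw [← Real.rpow_natCast B (m - 1)]
      apply Real.rpow_le_rpow_of_exponent_le hB1
      have : ((m - 1 : ℕ) : ℝ) = (m : ℝ) - 1 := by
        have : 1 ≤ m := by omega
        push_cast [Nat.cast_sub this]; ring
      rw [this]; linarith
    have hrpow : B ^ (α * k - 2) = (2 * R + 1) ^ k / B ^ 2 := by
      rw [Real.rpow_sub hBpos, Real.rpow_mul hBpos.le, hBα, Real.rpow_natCast,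
        Real.rpow_two]
    have hGamma_lb : (2 * R + 1) ^ k / P ≤ Real.Gamma (α * k + 1) := by
      have h1 : (2 * R + 1) ^ k / P = B ^ (α * k - 2) / Real.exp B := by
        rw [hrpow, hPdef]; field_simp
      calc (2 * R + 1) ^ k / P = B ^ (α * k - 2) / Real.exp B := h1
      _ ≤ B ^ (m - 1 : ℕ) / Real.exp B := by gcongr
      _ ≤ ((m - 1).factorial : ℝ) := hfac2
      _ = Real.Gamma (m : ℝ) := hfac.symm
      _ ≤ Real.Gamma (α * k + 1) := hG1
    -- conclude
    have hΓpos : 0 < Real.Gamma (α * k + 1) := Real.Gamma_pos_of_pos (by linarith)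
    have hnum : (0 : ℝ) ≤ (k : ℝ) * R ^ k := by positivity
    calc (k : ℝ) * R ^ k / Real.Gamma (α * k + 1)
        ≤ (k : ℝ) * R ^ k / ((2 * R + 1) ^ k / P) := by gcongr
      _ = P * ((k : ℝ) * (R / (2 * R + 1)) ^ k) := by
          rw [div_div_eq_mul_div, div_pow]
          field_simp
      _ ≤ P * ((k : ℝ) ^ 1 * (1/2 : ℝ) ^ k) := by
          apply mul_le_mul_of_nonneg_left _ hPpos.le
          rw [pow_one]
          apply mul_le_mul_of_nonneg_left _ (Nat.cast_nonneg k)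
          apply pow_le_pow_left₀ (by positivity)
          rw [div_le_div_iff₀ (by linarith) (by norm_num)]
          linarith
    done
  -- assemble summability
  apply Summable.of_norm_bounded_eventually_nat hgeo
  filter_upwards [Filter.eventually_atTop.2 ⟨K, hK⟩] with k hk
  rw [Real.norm_eq_abs, abs_of_nonneg (div_nonneg (by positivity)
    (Real.Gamma_pos_of_pos (by positivity : (0:ℝ) < α * k + 1)).le)]
  exact key k hk

/-- Two-parameter Mittag-Leffler function (real version):
`E_{α,β}(x) = ∑ₖ x^k / Γ(αk + β)`. -/
noncomputable def ML (α β x : ℝ) : ℝ := ∑' k : ℕ, x ^ k / Real.Gamma (α * k + β)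

/-- **Derivative of the Mittag-Leffler relaxation function.** For `0 < α < 1`,
`λ ∈ ℝ` and `x > 0`, the function `x ↦ E_{α,1}(λ x^α)` is differentiable at `x`
with derivative `λ x^{α-1} E_{α,α}(λ x^α)`. -/
theorem hasDerivAt_mittagLeffler_relaxation (α lam x : ℝ)
    (hα0 : 0 < α) (hα1 : α < 1) (hx : 0 < x) :
    HasDerivAt (fun y => ML α 1 (lam * y ^ α))
      (lam * x ^ (α - 1) * ML α α (lam * x ^ α)) x := by
  have hα : α ≠ 0 := hα0.ne'
  set z : ℝ := lam * x ^ α with hz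
  set R : ℝ := |z| + 1 with hRdef
  have hR0 : (0 : ℝ) ≤ R := by positivity
  have hR1 : (1 : ℝ) ≤ R := by have := abs_nonneg z; linarith
  have hu : Summable (fun k : ℕ => (k : ℝ) * R ^ k / Real.Gamma (α * k + 1)) :=
    ml_summable_aux α R hα0 hR0
  have hΓpos : ∀ k : ℕ, 0 < Real.Gamma (α * k + 1) := fun k =>
    Real.Gamma_pos_of_pos (by positivity)
  -- norm bound for derivatives of the terms
  have hbound : ∀ (k : ℕ) (y : ℝ), y ∈ ball (0 : ℝ) R →
      ‖(k : ℝ) * y ^ (k - 1) / Real.Gamma (α * k + 1)‖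
        ≤ (k : ℝ) * R ^ k / Real.Gamma (α * k + 1) := by
    intro k y hy
    rw [mem_ball, Real.dist_eq, sub_zero] at hy
    rw [Real.norm_eq_abs, abs_div, abs_of_pos (hΓpos k), abs_mul, Nat.abs_cast]
    gcongr
    calc |y ^ (k - 1)| = |y| ^ (k - 1) := abs_pow y _
      _ ≤ R ^ (k - 1) := pow_le_pow_left₀ (abs_nonneg y) hy.le _
      _ ≤ R ^ k := pow_le_pow_right₀ hR1 (Nat.sub_le k 1)
  -- derivative of the outer power series
  have hG : HasDerivAt (fun w : ℝ => ∑' k : ℕ, w ^ k / Real.Gamma (α * k + 1))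
      (∑' k : ℕ, (k : ℝ) * z ^ (k - 1) / Real.Gamma (α * k + 1)) z := by
    have hderiv : ∀ (k : ℕ) (y : ℝ), y ∈ ball (0 : ℝ) R →
        HasDerivAt (fun w : ℝ => w ^ k / Real.Gamma (α * k + 1))
          ((k : ℝ) * y ^ (k - 1) / Real.Gamma (α * k + 1)) y :=
      fun k y _ => (hasDerivAt_pow k y).div_const _
    have h0sum : Summable (fun k : ℕ => (0 : ℝ) ^ k / Real.Gamma (α * k + 1)) := by
      apply summable_of_ne_finset_zero (s := {0})
      intro k hk
      simp only [Finset.mem_singleton] at hk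
      rw [zero_pow hk, zero_div]
    exact hasDerivAt_tsum_of_isPreconnected hu isOpen_ball
      (convex_ball (0:ℝ) R).isPreconnected hderiv hbound
      (mem_ball_self (by linarith)) h0sum
      (by rw [mem_ball, Real.dist_eq, sub_zero]; exact lt_add_one _)
  -- inner derivative
  have hinner : HasDerivAt (fun y : ℝ => lam * y ^ α) (lam * (α * x ^ (α - 1))) x :=
    (Real.hasDerivAt_rpow_const (Or.inl hx.ne')).const_mul lam
  have hcomp := hG.comp x hinner
  -- evaluate the derivative series
  have hsum' : Summable (fun k : ℕ => (k : ℝ) * z ^ (k - 1) / Real.Gamma (α * k + 1)) :=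
    hu.of_norm_bounded (fun k => hbound k z
      (by rw [mem_ball, Real.dist_eq, sub_zero]; exact lt_of_lt_of_le (lt_add_one _) le_rfl))
  have hval : (∑' k : ℕ, (k : ℝ) * z ^ (k - 1) / Real.Gamma (α * k + 1))
      = α⁻¹ * ML α α z := by
    rw [Summable.tsum_eq_zero_add hsum']
    have h0 : ((0 : ℕ) : ℝ) * z ^ (0 - 1) / Real.Gamma (α * ((0 : ℕ) : ℝ) + 1) = 0 := by simp
    rw [h0, zero_add]
    have hterm : ∀ k : ℕ, ((k : ℝ) + 1) * z ^ k / Real.Gamma (α * ((k : ℝ) + 1) + 1)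
        = α⁻¹ * (z ^ k / Real.Gamma (α * k + α)) := by
      intro k
      have hpos : (0 : ℝ) < α * k + α := by positivity
      have hΓ : Real.Gamma (α * ((k : ℝ) + 1) + 1) = (α * k + α) * Real.Gamma (α * k + α) := by
        have he : α * ((k : ℝ) + 1) + 1 = (α * k + α) + 1 := by ring
        rw [he, Real.Gamma_add_one hpos.ne']
      rw [hΓ]
      have hΓpos' : (0 : ℝ) < Real.Gamma (α * k + α) := Real.Gamma_pos_of_pos hpos
      field_simp
    simp only [Nat.cast_add, Nat.cast_one, Nat.add_sub_cancel]
    simp only [hterm]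
    rw [tsum_mul_left]
    rfl
  rw [hval] at hcomp
  have harith : α⁻¹ * ML α α z * (lam * (α * x ^ (α - 1)))
      = lam * x ^ (α - 1) * ML α α z := by
    field_simp
  rw [harith] at hcomp
  exact hcomp
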